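/- Let n > 3 and let A be an n×n×n ASHM in which every line contains at most one −1 (a near-permutation hypermatrix). Then the ASHM-Latin square L(A) has no constant line. -/

import Mathlib

open Finset

/-- A line (vector) of integers is "alternating" in the ASM sense:
all prefix sums are 0 or 1, and the total sum is 1. This is equivalent to the
nonzero entries being ±1, alternating in sign, beginning and ending with +1. -/
def AltLine {n : ℕ} (v : Fin n → ℤ) : Prop :=
  (∀ t : Fin n, (∑ s ∈ Finset.univ.filter (fun s => s ≤ t), v s) = 0 ∨
      (∑ s ∈ Finset.univ.filter (fun s => s ≤ t), v s) = 1) ∧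
  (∑ s, v s) = 1

/-- Alternating sign matrix. -/
def IsAsm {n : ℕ} (A : Matrix (Fin n) (Fin n) ℤ) : Prop :=
  (∀ i, AltLine (fun j => A i j)) ∧ (∀ j, AltLine (fun i => A i j))

/-- Alternating sign hypermatrix: every line in each of the three directions alternates. -/
def IsAshm {n : ℕ} (A : Fin n → Fin n → Fin n → ℤ) : Prop :=
  (∀ j k, AltLine (fun i => A i j k)) ∧
  (∀ i k, AltLine (fun j => A i j k)) ∧
  (∀ i j, AltLine (fun k => A i j k))

/-- The ASHM-Latin square `L(A) = 1·A₁ + 2·A₂ + ⋯ + n·Aₙ` (planes indexed from 1). -/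
def Lmat {n : ℕ} (A : Fin n → Fin n → Fin n → ℤ) (i j : Fin n) : ℤ :=
  ∑ k : Fin n, ((k.1 : ℤ) + 1) * A i j k

lemma filter_le_bot {n : ℕ} (a : Fin n) (ha : a.1 = 0) :
    Finset.univ.filter (fun s : Fin n => s ≤ a) = {a} := by
  ext s
  simp only [Finset.mem_filter, Finset.mem_univ, true_and, Finset.mem_singleton,
    Fin.le_def, Fin.ext_iff, ha]
  omega

lemma prefix_bot {n : ℕ} (v : Fin n → ℤ) (a : Fin n) (ha : a.1 = 0) :
    (∑ s ∈ Finset.univ.filter (fun s => s ≤ a), v s) = v a := by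
  rw [filter_le_bot a ha, Finset.sum_singleton]

lemma filter_le_succ {n : ℕ} (a b : Fin n) (hab : b.1 = a.1 + 1) :
    Finset.univ.filter (fun s : Fin n => s ≤ b)
      = insert b (Finset.univ.filter (fun s : Fin n => s ≤ a)) := by
  ext s
  simp only [Finset.mem_filter, Finset.mem_univ, true_and, Finset.mem_insert,
    Fin.le_def, Fin.ext_iff, hab]
  omega

lemma prefix_succ {n : ℕ} (v : Fin n → ℤ) (a b : Fin n) (hab : b.1 = a.1 + 1) :
    (∑ s ∈ Finset.univ.filter (fun s => s ≤ b), v s)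
      = (∑ s ∈ Finset.univ.filter (fun s => s ≤ a), v s) + v b := by
  rw [filter_le_succ a b hab, Finset.sum_insert]
  · ring
  · simp only [Finset.mem_filter, Finset.mem_univ, true_and, Fin.le_def]
    omega

lemma filter_le_penult {n : ℕ} (a b : Fin n) (ha : a.1 = n - 2) (hb : b.1 = n - 1)
    (hn : 2 ≤ n) :
    Finset.univ.filter (fun s : Fin n => s ≤ a) = Finset.univ.erase b := by
  ext s
  have hs := s.isLt
  simp only [Finset.mem_filter, Finset.mem_univ, true_and, Finset.mem_erase,
    Fin.le_def, Fin.ext_iff, ha, hb, and_true]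
  omega

lemma prefix_penult {n : ℕ} (v : Fin n → ℤ) (a b : Fin n) (ha : a.1 = n - 2)
    (hb : b.1 = n - 1) (hn : 2 ≤ n) :
    (∑ s ∈ Finset.univ.filter (fun s => s ≤ a), v s) = (∑ s, v s) - v b := by
  rw [filter_le_penult a b ha hb hn, Finset.sum_erase_eq_sub (Finset.mem_univ b)]

lemma altLine_entry {n : ℕ} {v : Fin n → ℤ} (hv : AltLine v) (t : Fin n) :
    -1 ≤ v t ∧ v t ≤ 1 := by
  rcases Nat.eq_zero_or_pos t.1 with h0 | hpos
  · have h1 := hv.1 t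
    rw [prefix_bot v t h0] at h1
    omega
  · have hab : t.1 = (⟨t.1 - 1, by omega⟩ : Fin n).1 + 1 := by
      simp only
      omega
    have hstep := prefix_succ v ⟨t.1 - 1, by omega⟩ t hab
    have h1 := hv.1 t
    have h2 := hv.1 ⟨t.1 - 1, by omega⟩
    omega

lemma altLine_single {n : ℕ} {v : Fin n → ℤ} (hv : AltLine v) (hpos : ∀ k, 0 ≤ v k) :
    ∃ q, v q = 1 ∧ ∀ k, k ≠ q → v k = 0 := by
  have hsum := hv.2
  have h1 : ∃ q, v q ≠ 0 := by
    by_contra h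
    push_neg at h
    rw [Finset.sum_eq_zero (fun i _ => h i)] at hsum
    exact one_ne_zero hsum.symm
  obtain ⟨q, hq⟩ := h1
  have hle := (altLine_entry hv q).2
  have hq1 : v q = 1 := by have := hpos q; omega
  refine ⟨q, hq1, ?_⟩
  have hsplit : v q + ∑ k ∈ Finset.univ.erase q, v k = ∑ k, v k :=
    Finset.add_sum_erase _ v (Finset.mem_univ q)
  have h0 : ∑ k ∈ Finset.univ.erase q, v k = 0 := by omega
  intro k hk
  exact (Finset.sum_eq_zero_iff_of_nonneg (fun i _ => hpos i)).1 h0 k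
    (Finset.mem_erase.2 ⟨hk, Finset.mem_univ k⟩)

lemma weighted_single {n : ℕ} {v : Fin n → ℤ} {q : Fin n} (hq : v q = 1)
    (h0 : ∀ k, k ≠ q → v k = 0) :
    (∑ k : Fin n, ((k.1 : ℤ) + 1) * v k) = (q.1 : ℤ) + 1 := by
  rw [Finset.sum_eq_single q]
  · rw [hq]; ring
  · intro b _ hb; rw [h0 b hb]; ring
  · intro h; exact absurd (Finset.mem_univ q) h

lemma key_asm {n : ℕ} (hn : 3 < n) (B : Fin n → Fin n → ℤ)
    (hrow : ∀ i, AltLine (fun k => B i k))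
    (hcol : ∀ k, AltLine (fun i => B i k))
    (hnearcol : ∀ k, (Finset.univ.filter (fun i : Fin n => B i k = -1)).card ≤ 1)
    (c : ℤ) (hc : ∀ i, (∑ k : Fin n, ((k.1 : ℤ) + 1) * B i k) = c) : False := by
  obtain ⟨i0, e0⟩ : ∃ i : Fin n, i.1 = 0 := ⟨⟨0, by omega⟩, rfl⟩
  obtain ⟨i1, e1⟩ : ∃ i : Fin n, i.1 = 1 := ⟨⟨1, by omega⟩, rfl⟩
  obtain ⟨im3, e3⟩ : ∃ i : Fin n, i.1 = n - 3 := ⟨⟨n - 3, by omega⟩, rfl⟩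
  obtain ⟨im2, e2⟩ : ∃ i : Fin n, i.1 = n - 2 := ⟨⟨n - 2, by omega⟩, rfl⟩
  obtain ⟨im1, em1⟩ : ∃ i : Fin n, i.1 = n - 1 := ⟨⟨n - 1, by omega⟩, rfl⟩
  -- row 0 has nonnegative entries, hence is a single +1
  have hP0 : ∀ k, B i0 k = 0 ∨ B i0 k = 1 := by
    intro k
    have h1 := (hcol k).1 i0
    rw [prefix_bot (fun i => B i k) i0 e0] at h1
    exact h1
  obtain ⟨q, hq1, hq0⟩ := altLine_single (hrow i0)
    (fun k => by rcases hP0 k with h | h <;> simp [h])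
  have hcq : (q.1 : ℤ) + 1 = c := by rw [← hc i0, weighted_single hq1 hq0]
  -- row n-1 has nonnegative entries, hence is a single +1
  have hPm : ∀ k, 0 ≤ B im1 k := by
    intro k
    have h1 := (hcol k).1 im2
    have h2 := prefix_penult (fun i => B i k) im2 im1 e2 em1 (by omega)
    have h3 := (hcol k).2
    simp only at h1 h2 h3
    omega
  obtain ⟨q', hq'1, hq'0⟩ := altLine_single (hrow im1) hPm
  have hcq' : (q'.1 : ℤ) + 1 = c := by rw [← hc im1, weighted_single hq'1 hq'0]
  have hqq' : q' = q := by
    have : (q'.1 : ℤ) = q.1 := by omega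
    exact Fin.ext (by exact_mod_cast this)
  rw [hqq'] at hq'1 hq'0
  -- row 1 has a -1, necessarily in column q
  have hrow1 : B i1 q = -1 := by
    by_cases hL : ∃ b, B i1 b = -1
    · obtain ⟨b, hb⟩ := hL
      by_contra hbq
      have hbne : b ≠ q := fun h => hbq (h ▸ hb)
      have h1 := (hcol b).1 i1
      have h2 := prefix_succ (fun i => B i b) i0 i1 (by omega)
      rw [prefix_bot (fun i => B i b) i0 e0] at h2
      simp only at h1 h2
      rw [hq0 b hbne] at h2
      rw [hb] at h2
      omega
    · push_neg at hL
      have hpos : ∀ k, 0 ≤ B i1 k := by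
        intro k
        have h5 := (altLine_entry (hrow i1) k).1
        have h6 := hL k
        omega
      obtain ⟨p, hp1, hp0⟩ := altLine_single (hrow i1) hpos
      have hcp : (p.1 : ℤ) + 1 = c := by rw [← hc i1, weighted_single hp1 hp0]
      have hpq : p = q := by
        have : (p.1 : ℤ) = q.1 := by omega
        exact Fin.ext (by exact_mod_cast this)
      rw [hpq] at hp1
      have h1 := (hcol q).1 i1
      have h2 := prefix_succ (fun i => B i q) i0 i1 (by omega)
      rw [prefix_bot (fun i => B i q) i0 e0] at h2
      simp only at h1 h2
      rw [hq1, hp1] at h2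
      omega
  -- row n-2 has a -1, necessarily in column q
  have hrowm2 : B im2 q = -1 := by
    have hstep : ∀ k, (∑ s ∈ Finset.univ.filter (fun s => s ≤ im2), B s k)
        = (∑ s ∈ Finset.univ.filter (fun s => s ≤ im3), B s k) + B im2 k := by
      intro k
      exact prefix_succ (fun i => B i k) im3 im2 (by omega)
    by_cases hL : ∃ b, B im2 b = -1
    · obtain ⟨b, hb⟩ := hL
      by_contra hbq
      have hbne : b ≠ q := fun h => hbq (h ▸ hb)
      have h1 := (hcol b).1 im3
      have h2 := hstep b
      have h3 := prefix_penult (fun i => B i b) im2 im1 e2 em1 (by omega)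
      have h4 := (hcol b).2
      simp only at h1 h2 h3 h4
      rw [hq'0 b hbne] at h3
      rw [hb] at h2
      omega
    · push_neg at hL
      have hpos : ∀ k, 0 ≤ B im2 k := by
        intro k
        have h5 := (altLine_entry (hrow im2) k).1
        have h6 := hL k
        omega
      obtain ⟨p, hp1, hp0⟩ := altLine_single (hrow im2) hpos
      have hcp : (p.1 : ℤ) + 1 = c := by rw [← hc im2, weighted_single hp1 hp0]
      have hpq : p = q := by
        have : (p.1 : ℤ) = q.1 := by omega
        exact Fin.ext (by exact_mod_cast this)
      rw [hpq] at hp1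
      have h1 := (hcol q).1 im3
      have h2 := hstep q
      have h3 := prefix_penult (fun i => B i q) im2 im1 e2 em1 (by omega)
      have h4 := (hcol q).2
      simp only at h1 h2 h3 h4
      rw [hq'1] at h3
      rw [hp1] at h2
      omega
  -- column q now has two -1's, contradicting near-permutation
  have hne : i1 ≠ im2 := by
    intro h
    rw [Fin.ext_iff] at h
    omega
  have hsub : ({i1, im2} : Finset (Fin n))
      ⊆ Finset.univ.filter (fun i : Fin n => B i q = -1) := by
    intro x hx
    simp only [Finset.mem_insert, Finset.mem_singleton] at hx
    rcases hx with rfl | rfl <;>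
      simp only [Finset.mem_filter, Finset.mem_univ, true_and] <;>
      assumption
  have hcard : 2 ≤ (Finset.univ.filter (fun i : Fin n => B i q = -1)).card := by
    calc 2 = ({i1, im2} : Finset (Fin n)).card := by
            rw [Finset.card_insert_of_notMem (by simpa using hne),
              Finset.card_singleton]
      _ ≤ _ := Finset.card_le_card hsub
  have hfin := hnearcol q
  omega

theorem stmt9 {n : ℕ} (hn : 3 < n) (A : Fin n → Fin n → Fin n → ℤ) (hA : IsAshm A)
    (hnear1 : ∀ j k : Fin n, (Finset.univ.filter (fun i : Fin n => A i j k = -1)).card ≤ 1)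
    (hnear2 : ∀ i k : Fin n, (Finset.univ.filter (fun j : Fin n => A i j k = -1)).card ≤ 1)
    (hnear3 : ∀ i j : Fin n, (Finset.univ.filter (fun k : Fin n => A i j k = -1)).card ≤ 1) :
    (∀ i : Fin n, ¬ ∃ c : ℤ, ∀ j : Fin n, Lmat A i j = c) ∧
    (∀ j : Fin n, ¬ ∃ c : ℤ, ∀ i : Fin n, Lmat A i j = c) := by
  constructor
  · intro i ⟨c, hcLine⟩
    exact key_asm hn (fun j k => A i j k)
      (fun j => hA.2.2 i j) (fun k => hA.2.1 i k) (fun k => hnear2 i k) c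
      (fun j => hcLine j)
  · intro j ⟨c, hcLine⟩
    exact key_asm hn (fun i k => A i j k)
      (fun i => hA.2.2 i j) (fun k => hA.1 j k) (fun k => hnear1 j k) c
      (fun i => hcLine i)
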